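/- arXiv:1606.03167 — 5 statements merged into one kernel-verified Lean document; each statement's English description precedes it below -/
import Mathlib

section
/- Let S be Hermitian positive-semidefinite and N = diag(I_D, -I_D). If x is an eigenvector of N·S with eigenvalue ω > 0, then x† N x > 0 (the solution is normalizable with positive norm). -/
open Matrix
open scoped ComplexOrder

theorem stmt_1 {D : ℕ} (hD : 0 < D)
    (S N : Matrix (Fin D ⊕ Fin D) (Fin D ⊕ Fin D) ℂ)
    (hS : S.PosSemidef)
    (hN : N = Matrix.fromBlocks 1 0 0 (-1))
    (ω : ℝ) (hω : 0 < ω)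
    (x : Fin D ⊕ Fin D → ℂ) (hx : x ≠ 0)
    (heig : S.mulVec x = (ω : ℂ) • N.mulVec x) :
    0 < star x ⬝ᵥ N.mulVec x := by
  have hquad : star x ⬝ᵥ S.mulVec x = (ω : ℂ) * (star x ⬝ᵥ N.mulVec x) := by
    rw [heig, dotProduct_smul, smul_eq_mul]
  have hnonneg : 0 ≤ star x ⬝ᵥ S.mulVec x := hS.dotProduct_mulVec_nonneg x
  have hωne : (ω : ℂ) ≠ 0 := by exact_mod_cast hω.ne'
  have hge : 0 ≤ star x ⬝ᵥ N.mulVec x := by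
    have : 0 ≤ (ω : ℂ) * (star x ⬝ᵥ N.mulVec x) := hquad ▸ hnonneg
    have hωpos : (0 : ℂ) < (ω : ℂ) := by exact_mod_cast hω
    have hinv : (0:ℂ) ≤ (ω:ℂ)⁻¹ := by
      rw [← Complex.ofReal_inv]
      exact_mod_cast inv_nonneg.mpr hω.le
    have h2 := mul_nonneg hinv this
    rwa [inv_mul_cancel_left₀ hωne] at h2
  rcases hge.lt_or_eq with h | h
  · exact h
  · exfalso
    have hSz : S.mulVec x = 0 := by
      rw [← hS.dotProduct_mulVec_zero_iff, hquad, ← h, mul_zero]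
    have hNz : N.mulVec x = 0 := by
      have := hSz.symm.trans heig
      exact (smul_eq_zero.mp this.symm).resolve_left hωne
    apply hx
    have hNN : N * N = 1 := by
      rw [hN]
      simp [Matrix.fromBlocks_multiply]
    calc x = (N * N).mulVec x := by rw [hNN, one_mulVec]
    _ = N.mulVec (N.mulVec x) := by rw [← mulVec_mulVec]
    _ = 0 := by rw [hNz, mulVec_zero]
end

section
/- Let S be Hermitian positive-semidefinite and N = diag(I_D, -I_D). If x ∈ Ker(S) with x ≠ 0 and ξ₂ satisfies S ξ₂ = i c N x for some nonzero c ∈ ℂ, then there is no ξ₃ with S ξ₃ = i c' N ξ₂ + i c'' N x for complex c', c'' with c' ≠ 0 (i.e., the Jordan chain cannot be extended to length three). -/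
open Matrix
open scoped ComplexOrder

lemma herm_swap {n : Type*} [Fintype n] {M : Matrix n n ℂ} (hM : M.IsHermitian)
    (a b : n → ℂ) : star a ⬝ᵥ M *ᵥ b = star (star b ⬝ᵥ M *ᵥ a) := by
  rw [star_dotProduct, star_mulVec, hM.eq, dotProduct_mulVec]

theorem stmt_5 {D : ℕ} (hD : 0 < D)
    (S N : Matrix (Fin D ⊕ Fin D) (Fin D ⊕ Fin D) ℂ)
    (hS : S.PosSemidef)
    (hN : N = Matrix.fromBlocks 1 0 0 (-1))
    (x ξ₂ : Fin D ⊕ Fin D → ℂ) (hx0 : x ≠ 0) (hker : S.mulVec x = 0)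
    (c : ℂ) (hc : c ≠ 0)
    (hchain : S.mulVec ξ₂ = (Complex.I * c) • N.mulVec x) :
    ¬ ∃ (ξ₃ : Fin D ⊕ Fin D → ℂ) (c' c'' : ℂ), c' ≠ 0 ∧
      S.mulVec ξ₃ =
        (Complex.I * c') • N.mulVec ξ₂ + (Complex.I * c'') • N.mulVec x := by
  rintro ⟨ξ₃, c', c'', hc', hξ₃⟩
  have hNh : N.IsHermitian := by
    subst hN
    ext (i | i) (j | j) <;>
      simp [Matrix.IsHermitian, Matrix.conjTranspose_apply, Matrix.fromBlocks,
        Matrix.one_apply, eq_comm]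
  -- x† S y = 0 for all y
  have hxS : ∀ y, star x ⬝ᵥ S *ᵥ y = 0 := by
    intro y
    rw [herm_swap hS.1, hker, dotProduct_zero, star_zero]
  -- x† N x = 0
  have h1 : star x ⬝ᵥ N *ᵥ x = 0 := by
    have := hxS ξ₂
    rw [hchain, dotProduct_smul, smul_eq_mul, mul_eq_zero] at this
    rcases this with h | h
    · exact absurd h (by simp [Complex.I_ne_zero, hc])
    · exact h
  -- x† N ξ₂ = 0
  have h2 : star x ⬝ᵥ N *ᵥ ξ₂ = 0 := by
    have := hxS ξ₃
    rw [hξ₃, dotProduct_add, dotProduct_smul, dotProduct_smul, h1, smul_zero,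
      add_zero, smul_eq_mul, mul_eq_zero] at this
    rcases this with h | h
    · exact absurd h (by simp [Complex.I_ne_zero, hc'])
    · exact h
  -- ξ₂† N x = 0
  have h3 : star ξ₂ ⬝ᵥ N *ᵥ x = 0 := by
    rw [herm_swap hNh, h2, star_zero]
  -- ξ₂† S ξ₂ = 0
  have h4 : star ξ₂ ⬝ᵥ S *ᵥ ξ₂ = 0 := by
    rw [hchain, dotProduct_smul, h3, smul_zero]
  have h5 : S *ᵥ ξ₂ = 0 := (hS.dotProduct_mulVec_zero_iff ξ₂).mp h4
  have h6 : N *ᵥ x = 0 := by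
    have := hchain.symm.trans h5
    rw [smul_eq_zero] at this
    rcases this with h | h
    · exact absurd h (by simp [Complex.I_ne_zero, hc])
    · exact h
  -- N is invertible: N * N = 1
  have hNN : N * N = 1 := by
    subst hN
    rw [Matrix.fromBlocks_multiply]
    simp [Matrix.fromBlocks_one]
  have : x = 0 := by
    have := congrArg (N.mulVec) h6
    rwa [Matrix.mulVec_mulVec, hNN, Matrix.one_mulVec, Matrix.mulVec_zero] at this
  exact hx0 this
end

section
/- Let S be Hermitian positive-semidefinite and N = diag(I_D, -I_D). Then the generalized eigenspace of N·S at eigenvalue 0 satisfies Ker((N S)²) = Ker((N S)^k) for all k ≥ 2; equivalently, all Jordan blocks of N·S at eigenvalue 0 have size at most 2. -/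
open Matrix
open scoped ComplexOrder

theorem stmt_14 {D : ℕ} (hD : 0 < D)
    (S N : Matrix (Fin D ⊕ Fin D) (Fin D ⊕ Fin D) ℂ)
    (hS : S.PosSemidef)
    (hN : N = Matrix.fromBlocks 1 0 0 (-1)) :
    ∀ k : ℕ, 2 ≤ k → ∀ v : Fin D ⊕ Fin D → ℂ,
      ((N * S) ^ k).mulVec v = 0 ↔ ((N * S) ^ 2).mulVec v = 0 := by
  have hN2 : N * N = 1 := by
    subst hN
    rw [Matrix.fromBlocks_multiply]
    simp [← Matrix.fromBlocks_one]
  have hNH : Nᴴ = N := by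
    subst hN
    rw [Matrix.fromBlocks_conjTranspose]
    simp
  have hSH : Sᴴ = S := hS.1
  have key : ∀ v : Fin D ⊕ Fin D → ℂ,
      ((N * S) ^ 3).mulVec v = 0 → ((N * S) ^ 2).mulVec v = 0 := by
    intro v h3
    set b := (N * S).mulVec v with hb
    have hM : (S * N) * (S * (N * S)) = N * ((N * S) ^ 3) := by
      simp only [pow_succ, pow_zero, one_mul, Matrix.mul_assoc]
      rw [← Matrix.mul_assoc N N (S * (N * (S * (N * S)))), hN2, Matrix.one_mul]
    have hq : star b ⬝ᵥ S *ᵥ b = 0 := by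
      rw [hb, Matrix.star_mulVec, Matrix.conjTranspose_mul, hNH, hSH,
        Matrix.mulVec_mulVec, ← Matrix.dotProduct_mulVec, Matrix.mulVec_mulVec,
        hM, ← Matrix.mulVec_mulVec, h3, Matrix.mulVec_zero, dotProduct_zero]
    have hSb : S *ᵥ b = 0 := (hS.dotProduct_mulVec_zero_iff b).mp hq
    rw [show (N * S) ^ 2 = N * (S * (N * S)) by rw [sq, Matrix.mul_assoc],
      ← Matrix.mulVec_mulVec, ← Matrix.mulVec_mulVec, ← hb, hSb,
      Matrix.mulVec_zero]
  have step : ∀ (j : ℕ) (v : Fin D ⊕ Fin D → ℂ),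
      ((N * S) ^ (3 + j)).mulVec v = 0 → ((N * S) ^ (2 + j)).mulVec v = 0 := by
    intro j v h
    rw [pow_add, ← Matrix.mulVec_mulVec] at h ⊢
    exact key _ h
  intro k hk v
  constructor
  · intro h
    obtain ⟨m, rfl⟩ := Nat.exists_eq_add_of_le hk
    induction m with
    | zero => simpa using h
    | succ n ih =>
      refine ih (by omega) ?_
      refine step n v ?_
      rwa [show 3 + n = 2 + (n + 1) from by omega]
  · intro h
    obtain ⟨m, rfl⟩ := Nat.exists_eq_add_of_le hk
    rw [show 2 + m = m + 2 from by omega, pow_add, ← Matrix.mulVec_mulVec, h,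
      Matrix.mulVec_zero]
end

section
/- Let S be Hermitian positive-semidefinite and N = diag(I_D, -I_D), and suppose ω ≠ 0 is real. Then N·S has no nontrivial Jordan block at eigenvalue ω; i.e., Ker((N S - ω I)²) = Ker(N S - ω I). -/
open Matrix
open scoped ComplexOrder

theorem stmt_16 {D : ℕ} (hD : 0 < D)
    (S N : Matrix (Fin D ⊕ Fin D) (Fin D ⊕ Fin D) ℂ)
    (hS : S.PosSemidef)
    (hN : N = Matrix.fromBlocks 1 0 0 (-1))
    (ω : ℝ) (hω : ω ≠ 0) :
    ∀ v : Fin D ⊕ Fin D → ℂ,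
      ((N * S - (ω : ℂ) • 1) ^ 2).mulVec v = 0 ↔
        (N * S - (ω : ℂ) • 1).mulVec v = 0 := by
  have hNH : Nᴴ = N := by
    subst hN
    simp [Matrix.fromBlocks_conjTranspose]
  have hNN : N * N = 1 := by
    subst hN
    simp [Matrix.fromBlocks_multiply]
  intro v
  set A := N * S - (ω : ℂ) • 1 with hAdef
  constructor
  · intro hv
    set w := A.mulVec v with hw
    clear_value w
    have hAw : A.mulVec w = 0 := by
      rw [hw, Matrix.mulVec_mulVec, ← pow_two]
      exact hv
    have hNSw : (N * S).mulVec w = (ω : ℂ) • w := by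
      have := hAw
      rw [hAdef, Matrix.sub_mulVec, Matrix.smul_mulVec, Matrix.one_mulVec,
        sub_eq_zero] at this
      exact this
    have hSw : S.mulVec w = (ω : ℂ) • N.mulVec w := by
      have h1 : N.mulVec ((N * S).mulVec w) = N.mulVec ((ω : ℂ) • w) := by
        rw [hNSw]
      rw [Matrix.mulVec_mulVec, ← mul_assoc, hNN, one_mul, Matrix.mulVec_smul] at h1
      exact h1
    -- key identity
    have key : ∀ x, star w ⬝ᵥ S.mulVec x = (ω : ℂ) * (star (N.mulVec w) ⬝ᵥ x) := by
      intro x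
      rw [Matrix.dotProduct_mulVec]
      have h2 : star w ᵥ* S = star (S.mulVec w) := by
        rw [Matrix.star_mulVec, hS.1]
      rw [h2, hSw]
      simp [star_smul, smul_dotProduct, Complex.star_def, Complex.conj_ofReal]
    have hdot : star w ⬝ᵥ S.mulVec w = 0 := by
      have hwexp : S.mulVec w = S.mulVec ((N * S).mulVec v) - (ω : ℂ) • S.mulVec v := by
        rw [hw, hAdef, Matrix.sub_mulVec, Matrix.smul_mulVec, Matrix.one_mulVec,
          Matrix.mulVec_sub, Matrix.mulVec_smul]
      have t1 : star w ⬝ᵥ S.mulVec ((N * S).mulVec v)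
          = (ω : ℂ) * ((ω : ℂ) * (star (N.mulVec w) ⬝ᵥ v)) := by
        rw [key]
        congr 1
        have : star (N.mulVec w) ⬝ᵥ (N * S).mulVec v
            = star w ⬝ᵥ S.mulVec v := by
          rw [Matrix.star_mulVec, hNH, Matrix.dotProduct_mulVec, Matrix.vecMul_vecMul,
            ← mul_assoc, hNN, one_mul, ← Matrix.dotProduct_mulVec]
        rw [this, key]
      have t2 : star w ⬝ᵥ S.mulVec v = (ω : ℂ) * (star (N.mulVec w) ⬝ᵥ v) := key v
      rw [hwexp, dotProduct_sub, t1, dotProduct_smul, t2]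
      simp only [smul_eq_mul]; ring
    have hSw0 : S.mulVec w = 0 := (hS.dotProduct_mulVec_zero_iff w).mp hdot
    have hNw0 : N.mulVec w = 0 := by
      have h := hSw.symm.trans hSw0
      rcases smul_eq_zero.mp h with h | h
      · exact absurd (by exact_mod_cast h) hω
      · exact h
    have : w = 0 := by
      have h3 : N.mulVec (N.mulVec w) = 0 := by rw [hNw0, Matrix.mulVec_zero]
      rwa [Matrix.mulVec_mulVec, hNN, Matrix.one_mulVec] at h3
    exact this
  · intro hv
    rw [pow_two, ← Matrix.mulVec_mulVec, hv, Matrix.mulVec_zero]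
end

section
/- Let N = diag(I_D, -I_D) and Σ_x = [[0,I_D],[I_D,0]]. Suppose S is Hermitian, positive-semidefinite, and satisfies Σ_x S* Σ_x = S. If x ∈ Ker(S), then Σ_x x* ∈ Ker(S), and if additionally S ξ = i c N x (c ≠ 0), then S (Σ_x ξ*) = i c̄ N (Σ_x x*); i.e., Jordan chains at eigenvalue 0 map to Jordan chains under the duality v ↦ Σ_x v*. -/
open Matrix
open scoped ComplexOrder

theorem stmt_19 {D : ℕ} (hD : 0 < D)
    (S N Sx : Matrix (Fin D ⊕ Fin D) (Fin D ⊕ Fin D) ℂ)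
    (hS : S.PosSemidef)
    (hN : N = Matrix.fromBlocks 1 0 0 (-1))
    (hSx : Sx = Matrix.fromBlocks 0 1 1 0)
    (hsym : Sx * S.map (starRingEnd ℂ) * Sx = S)
    (x : Fin D ⊕ Fin D → ℂ) (hker : S.mulVec x = 0) :
    S.mulVec (Sx.mulVec (star x)) = 0 ∧
      ∀ (ξ : Fin D ⊕ Fin D → ℂ) (c : ℂ), c ≠ 0 →
        S.mulVec ξ = (Complex.I * c) • N.mulVec x →
        S.mulVec (Sx.mulVec (star ξ)) =
          (Complex.I * (starRingEnd ℂ) c) • N.mulVec (Sx.mulVec (star x)) := by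
  have hSxSx : Sx * Sx = 1 := by
    subst hSx
    rw [Matrix.fromBlocks_multiply, ← Matrix.fromBlocks_one]
    simp
  have hcomm : S * Sx = Sx * S.map (starRingEnd ℂ) := by
    calc S * Sx = Sx * S.map (starRingEnd ℂ) * Sx * Sx := by rw [hsym]
    _ = Sx * S.map (starRingEnd ℂ) * (Sx * Sx) := by rw [mul_assoc]
    _ = _ := by rw [hSxSx, mul_one]
  have hmapstar : ∀ (A : Matrix (Fin D ⊕ Fin D) (Fin D ⊕ Fin D) ℂ) (v : Fin D ⊕ Fin D → ℂ),
      (A.map (starRingEnd ℂ)).mulVec (star v) = star (A.mulVec v) := by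
    intro A v
    funext i
    simp [Matrix.mulVec, dotProduct, map_sum]
  have key : ∀ v, S.mulVec (Sx.mulVec (star v)) = Sx.mulVec (star (S.mulVec v)) := by
    intro v
    rw [Matrix.mulVec_mulVec, hcomm, ← Matrix.mulVec_mulVec, hmapstar]
  have hSxN : Sx * N = -(N * Sx) := by
    subst hSx hN
    rw [Matrix.fromBlocks_multiply, Matrix.fromBlocks_multiply]
    simp [Matrix.fromBlocks_neg]
  have hNmap : N.map (starRingEnd ℂ) = N := by
    subst hN
    ext i j
    rcases i with i | i <;> rcases j with j | j <;>
      simp [Matrix.fromBlocks, Matrix.one_apply, apply_ite]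
  have hNstar : ∀ v : Fin D ⊕ Fin D → ℂ, star (N.mulVec v) = N.mulVec (star v) := by
    intro v
    rw [← hmapstar, hNmap]
  constructor
  · rw [key, hker]
    simp [Matrix.mulVec_zero]
  · intro ξ c hc hξ
    rw [key, hξ, star_smul, hNstar, Matrix.mulVec_smul, Matrix.mulVec_mulVec, hSxN,
      Matrix.neg_mulVec, ← Matrix.mulVec_mulVec]
    rw [smul_neg, ← neg_smul]
    congr 1
    simp [Complex.ext_iff]
end
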